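/- Define the Gandhi polynomials by P̃_1(z) = 1 and P̃_{r+1}(z) = (z+1)^2·P̃_r(z+1) − z^2·P̃_r(z). Then for every r ≥ 1 and every positive integer n, P̃_r(−n) = (−1)^{r−1}·(2/n^2)·C(2n,n)^{−1}·Σ_{k=1}^{n} C(2n,n−k)·k^{2r+1}, and in particular P̃_r(−1) = (−1)^{r−1} and P̃_r(−2) = (−1)^{r−1}(2^{2r−1}+1)/3. -/

import Mathlib

open Polynomial

/-- `gandhi r` is the Gandhi polynomial `P̃_{r+1}` over `ℚ`, so `gandhi 0 = P̃_1 = 1`. -/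
noncomputable def gandhi : ℕ → Polynomial ℚ
  | 0 => 1
  | r + 1 => (X + 1) ^ 2 * (gandhi r).comp (X + 1) - X ^ 2 * gandhi r

open Finset

lemma q1 (N j : ℕ) : ((j:ℚ) + 1) * ((N+1).choose (j+1)) = ((N:ℚ)+1) * (N.choose j) := by
  have h2 : ((N:ℚ) + 1) * (N.choose j) = ((N+1).choose (j+1)) * ((j:ℚ)+1) := by
    exact_mod_cast congrArg (Nat.cast : ℕ → ℚ) (Nat.add_one_mul_choose_eq N j)
  linarith

lemma q2 (N j : ℕ) (hj : j ≤ N + 1) :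
    (((N:ℚ)+1) - j) * ((N+1).choose j) = ((N:ℚ)+1) * (N.choose j) := by
  have h2 : (N.choose j : ℚ) * ((N:ℚ)+1) = ((N+1).choose j) * (((N:ℚ)+1) - j) := by
    have := congrArg (Nat.cast : ℕ → ℚ) (Nat.choose_mul_succ_eq N j)
    push_cast [hj] at this
    convert this using 2
  linarith

lemma keyU' (n : ℕ) (hn : 1 ≤ n) :
    ∑ j ∈ range n, ((n:ℚ) - j) * ((2*n).choose j) = (n:ℚ) * ((2*n-1).choose (n-1)) := by
  have h2n : 2 * n = (2*n-1) + 1 := by omega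
  have hc : ((2*n-1 : ℕ):ℚ) + 1 = 2 * (n:ℚ) := by
    have : ((2*n-1 : ℕ):ℚ) = 2*(n:ℚ) - 1 := by
      push_cast [Nat.cast_sub (by omega : 1 ≤ 2*n)]; ring
    rw [this]; ring
  set f : ℕ → ℚ := fun j => if j = 0 then 0 else ((2*n-1).choose (j-1) : ℚ) with hf
  have hterm : ∀ j ∈ range n, ((n:ℚ) - j) * ((2*n).choose j) = (n:ℚ) * (f (j+1) - f j) := by
    intro j hj
    simp only [mem_range] at hj
    rcases j with _ | i
    · simp [hf]
    · have hpascal : ((2*n).choose (i+1) : ℚ)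
          = ((2*n-1).choose i : ℚ) + ((2*n-1).choose (i+1) : ℚ) := by
        rw [h2n, Nat.choose_succ_succ']
        push_cast; ring
      have hq := q1 (2*n-1) i
      rw [← h2n, hc, hpascal] at hq
      simp only [hf, if_neg (Nat.succ_ne_zero i), if_neg (Nat.succ_ne_zero (i+1))]
      simp only [Nat.add_sub_cancel]
      rw [hpascal]
      push_cast
      linear_combination -hq
  rw [Finset.sum_congr rfl hterm, ← Finset.mul_sum, Finset.sum_range_sub f n]
  simp only [hf]
  rw [if_neg (by omega : n ≠ 0)]
  simp

lemma keyU (n : ℕ) :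
    ∑ k ∈ Icc 1 n, (k:ℚ) * ((2*n).choose (n-k)) = (n:ℚ) * ((2*n-1).choose (n-1)) := by
  rcases Nat.eq_zero_or_pos n with h | hn
  · subst h; simp
  rw [← keyU' n hn]
  rw [← Finset.Ico_add_one_right_eq_Icc, Finset.sum_Ico_eq_sum_range]
  rw [← Finset.sum_range_reflect (fun j => ((n:ℚ) - j) * ((2*n).choose j)) n]
  apply Finset.sum_congr rfl
  intro j hj
  simp only [mem_range] at hj
  have h1 : n - 1 - j = n - (1 + j) := by omega
  have h2 : ((n:ℚ) - ((n - 1 - j : ℕ):ℚ)) = ((1 + j : ℕ):ℚ) := by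
    have hh : (n - 1 - j : ℕ) + (1 + j) = n := by omega
    have := congrArg (Nat.cast : ℕ → ℚ) hh
    push_cast at this ⊢
    linarith
  rw [h1] at h2 ⊢
  rw [h2]

lemma key3 (n k : ℕ) (h1 : 1 ≤ k) (h2 : k ≤ n - 1) (hn : 1 ≤ n) :
    ((2*n).choose (n-k) : ℚ) * ((n:ℚ)^2 - (k:ℚ)^2)
      = 2*(n:ℚ)*(2*(n:ℚ)-1) * ((2*(n-1)).choose ((n-1)-k) : ℚ) := by
  obtain ⟨i, rfl⟩ : ∃ i, n = k + i + 1 := ⟨n - k - 1, by omega⟩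
  have hA : (2*(k+i+1)).choose (k+i+1-k) = (2*k+2*i+1+1).choose (i+1) := by
    congr 1 <;> omega
  have hC : (2*(k+i+1-1)).choose ((k+i+1-1)-k) = (2*k+2*i).choose i := by
    congr 1 <;> omega
  rw [hA, hC]
  have e1 := q1 (2*k+2*i+1) i
  have e2 := q2 (2*k+2*i) i (by omega)
  push_cast at e1 e2 ⊢
  linear_combination (2*(k:ℚ)+i+1) * e1 + (2*(k:ℚ)+2*i+2) * e2

lemma sumB (m n : ℕ) (hn : 1 ≤ n) :
    ∑ k ∈ Icc 1 n, ((2*n).choose (n-k) : ℚ) * (k:ℚ)^(m+2)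
      = (n:ℚ)^2 * ∑ k ∈ Icc 1 n, ((2*n).choose (n-k):ℚ) * (k:ℚ)^m
        - 2*(n:ℚ)*(2*(n:ℚ)-1) * ∑ k ∈ Icc 1 (n-1), ((2*(n-1)).choose ((n-1)-k):ℚ) * (k:ℚ)^m := by
  have hsplit : ∑ k ∈ Icc 1 n, ((2*n).choose (n-k):ℚ) * (k:ℚ)^m * ((n:ℚ)^2 - (k:ℚ)^2)
      = ∑ k ∈ Icc 1 (n-1), ((2*n).choose (n-k):ℚ) * (k:ℚ)^m * ((n:ℚ)^2 - (k:ℚ)^2) := by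
    have : n = (n-1) + 1 := by omega
    rw [this, Finset.sum_Icc_succ_top (by omega : 1 ≤ (n-1)+1)]
    rw [← this]
    simp
  have hmain : ∑ k ∈ Icc 1 (n-1), ((2*n).choose (n-k):ℚ) * (k:ℚ)^m * ((n:ℚ)^2 - (k:ℚ)^2)
      = 2*(n:ℚ)*(2*(n:ℚ)-1) * ∑ k ∈ Icc 1 (n-1), ((2*(n-1)).choose ((n-1)-k):ℚ) * (k:ℚ)^m := by
    rw [Finset.mul_sum]
    apply Finset.sum_congr rfl
    intro k hk
    simp only [mem_Icc] at hk
    have := key3 n k hk.1 hk.2 hn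
    linear_combination (k:ℚ)^m * this
  have expand : ∀ k : ℕ, ((2*n).choose (n-k):ℚ) * (k:ℚ)^m * ((n:ℚ)^2 - (k:ℚ)^2)
      = (n:ℚ)^2 * (((2*n).choose (n-k):ℚ) * (k:ℚ)^m) - ((2*n).choose (n-k):ℚ) * (k:ℚ)^(m+2) := by
    intro k; ring
  calc ∑ k ∈ Icc 1 n, ((2*n).choose (n-k) : ℚ) * (k:ℚ)^(m+2)
      = (n:ℚ)^2 * ∑ k ∈ Icc 1 n, ((2*n).choose (n-k):ℚ) * (k:ℚ)^m
        - ∑ k ∈ Icc 1 n, ((2*n).choose (n-k):ℚ) * (k:ℚ)^m * ((n:ℚ)^2 - (k:ℚ)^2) := by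
        rw [Finset.mul_sum, ← Finset.sum_sub_distrib]
        apply Finset.sum_congr rfl
        intro k _
        linear_combination -(expand k)
    _ = _ := by rw [hsplit, hmain]

lemma twoC (n : ℕ) (hn : 1 ≤ n) :
    ((2*n).choose n : ℚ) = 2 * ((2*n-1).choose (n-1)) := by
  obtain ⟨m, rfl⟩ : ∃ m, n = m + 1 := ⟨n - 1, by omega⟩
  have h1 : 2*(m+1) = (2*m+1)+1 := by omega
  have h2 : (2*(m+1)).choose (m+1) = (2*m+1).choose m + (2*m+1).choose (m+1) := by
    rw [h1, Nat.choose_succ_succ']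
  have h3 : (2*m+1).choose (m+1) = (2*m+1).choose m := Nat.choose_symm_half m
  have h4 : 2*(m+1)-1 = 2*m+1 := by omega
  have h5 : m + 1 - 1 = m := by omega
  rw [h2, h3, h4, h5]
  push_cast; ring

-- n * C(2n,n) = 2n * C(2n-1, n-1)
lemma r1 (n : ℕ) (hn : 1 ≤ n) :
    (n:ℚ) * ((2*n).choose n) = 2*(n:ℚ) * ((2*n-1).choose (n-1)) := by
  rw [twoC n hn]; ring

-- n * C(2n-1,n-1) = (2n-1) * C(2n-2, n-1)
lemma r2 (n : ℕ) (hn : 1 ≤ n) :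
    (n:ℚ) * ((2*n-1).choose (n-1)) = (2*(n:ℚ)-1) * ((2*n-2).choose (n-1)) := by
  have e := q2 (2*n-2) (n-1) (by omega)
  have h1 : 2*n-2+1 = 2*n-1 := by omega
  have h2 : ((2*n-2 : ℕ):ℚ) + 1 = 2*(n:ℚ) - 1 := by
    have : ((2*n-2:ℕ):ℚ) = 2*(n:ℚ) - 2 := by
      push_cast [Nat.cast_sub (by omega : 2 ≤ 2*n)]; ring
    rw [this]; ring
  have h3 : ((n-1 : ℕ):ℚ) = (n:ℚ) - 1 := by
    push_cast [Nat.cast_sub (by omega : 1 ≤ n)]; ring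
  rw [h1, h2, h3] at e
  have : (2*(n:ℚ) - 1 - ((n:ℚ)-1)) = (n:ℚ) := by ring
  rw [this] at e
  exact e

-- n^2 C(2n,n) = 2n(2n-1) C(2(n-1), n-1)
lemma ratio (n : ℕ) (hn : 1 ≤ n) :
    (n:ℚ)^2 * ((2*n).choose n) = 2*(n:ℚ)*(2*(n:ℚ)-1) * ((2*(n-1)).choose (n-1)) := by
  have h1 := r1 n hn
  have h2 := r2 n hn
  have h3 : (2*n-2) = 2*(n-1) := by omega
  rw [h3] at h2
  nlinarith [h1, h2]

lemma S0 (n : ℕ) (hn : 1 ≤ n) :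
    ∑ k ∈ Icc 1 n, ((2*n).choose (n-k):ℚ) * (k:ℚ)^3 = (n:ℚ)^2 * ((2*n).choose n) / 2 := by
  have hB := sumB 1 n hn
  norm_num at hB
  have hU : ∑ k ∈ Icc 1 n, ((2*n).choose (n-k):ℚ) * (k:ℚ)
      = (n:ℚ) * ((2*n-1).choose (n-1)) := by
    rw [← keyU n]; exact Finset.sum_congr rfl (fun k _ => by ring)
  have hU' : ∑ k ∈ Icc 1 (n-1), ((2*(n-1)).choose ((n-1)-k):ℚ) * (k:ℚ)
      = ((n-1:ℕ):ℚ) * ((2*(n-1)-1).choose ((n-1)-1)) := by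
    rw [← keyU (n-1)]; exact Finset.sum_congr rfl (fun k _ => by ring)
  rw [hB, hU, hU']
  rcases eq_or_lt_of_le hn with h1 | h2
  · have : n = 1 := h1.symm
    subst this
    norm_num
  · have hn1 : 1 ≤ n - 1 := by omega
    have hc : ((n-1:ℕ):ℚ) = (n:ℚ) - 1 := by
      push_cast [Nat.cast_sub (by omega : 1 ≤ n)]; ring
    have h3 := twoC n hn
    have h4 := r2 n hn
    have h5 := twoC (n-1) hn1
    have hidx : (2*n-2) = 2*(n-1) := by omega
    rw [hidx] at h4
    rw [hc]
    linear_combination (-(n:ℚ)^2/2) * h3 + ((n:ℚ)*((n:ℚ)-1)) * h4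
      + ((n:ℚ)*((n:ℚ)-1)*(2*(n:ℚ)-1)) * h5

lemma main (s : ℕ) : ∀ n : ℕ, 1 ≤ n →
    (gandhi s).eval (-(n:ℚ)) = (-1:ℚ)^s * (2/(n:ℚ)^2) * (((2*n).choose n : ℚ))⁻¹ *
      ∑ k ∈ Icc 1 n, ((2*n).choose (n-k):ℚ) * (k:ℚ)^(2*s+3) := by
  induction s with
  | zero =>
    intro n hn
    simp only [gandhi, Polynomial.eval_one]
    have hC : (((2*n).choose n : ℚ)) ≠ 0 :=
      Nat.cast_ne_zero.mpr (Nat.choose_pos (by omega : n ≤ 2*n)).ne'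
    have hn0 : (n:ℚ) ≠ 0 := Nat.cast_ne_zero.mpr (by omega)
    rw [show 2*0+3 = 3 from rfl, S0 n hn]
    field_simp
  | succ s ih =>
    intro n hn
    have heval : (gandhi (s+1)).eval (-(n:ℚ))
        = (-(n:ℚ)+1)^2 * (gandhi s).eval (-(n:ℚ)+1) - (n:ℚ)^2 * (gandhi s).eval (-(n:ℚ)) := by
      show ((X+1)^2 * (gandhi s).comp (X+1) - X^2 * gandhi s).eval _ = _
      simp [Polynomial.eval_comp]
    rcases eq_or_lt_of_le hn with h1 | h2
    · have : n = 1 := h1.symm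
      subst this
      rw [heval, ih 1 le_rfl]
      norm_num [Finset.Icc_self]
      rw [pow_succ]
      ring
    · have hn1 : 1 ≤ n - 1 := by omega
      have hc : ((n-1:ℕ):ℚ) = (n:ℚ) - 1 := by
        push_cast [Nat.cast_sub (by omega : 1 ≤ n)]; ring
      have ih1 := ih n hn
      have ih2 := ih (n-1) hn1
      rw [hc] at ih2
      have hcomp : -(n:ℚ) + 1 = -((n:ℚ)-1) := by ring
      rw [heval, hcomp, ih2, ih1]
      have hB := sumB (2*s+3) n hn
      have hratio := ratio n hn
      have hexp : 2*(s+1)+3 = (2*s+3)+2 := by omega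
      rw [hexp, hB]
      have hC : (((2*n).choose n : ℚ)) ≠ 0 :=
        Nat.cast_ne_zero.mpr (Nat.choose_pos (by omega : n ≤ 2*n)).ne'
      have hD : (((2*(n-1)).choose (n-1) : ℚ)) ≠ 0 :=
        Nat.cast_ne_zero.mpr (Nat.choose_pos (by omega : n-1 ≤ 2*(n-1))).ne'
      have hn0 : (n:ℚ) ≠ 0 := Nat.cast_ne_zero.mpr (by omega)
      have hn10 : (n:ℚ) - 1 ≠ 0 := by
        have : (2:ℚ) ≤ n := by exact_mod_cast h2
        intro h; linarith
      have h2n1 : 2*(n:ℚ)-1 ≠ 0 := by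
        have : (1:ℚ) ≤ n := by exact_mod_cast hn
        intro h; linarith
      have hDinv : (((2*(n-1)).choose (n-1) : ℚ))⁻¹
          = 2*(n:ℚ)*(2*(n:ℚ)-1) / (n:ℚ)^2 * (((2*n).choose n : ℚ))⁻¹ := by
        field_simp
        apply mul_left_cancel₀ hn0
        linear_combination hratio
      rw [hDinv]
      field_simp
      ring

theorem stmt_18 (r : ℕ) (hr : 1 ≤ r) :
    (∀ n : ℕ, 0 < n →
        (gandhi (r - 1)).eval (-(n : ℚ)) =
          (-1 : ℚ) ^ (r - 1) * (2 / (n : ℚ) ^ 2) * ((Nat.choose (2 * n) n : ℚ))⁻¹ *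
            ∑ k ∈ Finset.Icc 1 n, (Nat.choose (2 * n) (n - k) : ℚ) * (k : ℚ) ^ (2 * r + 1)) ∧
      (gandhi (r - 1)).eval (-1) = (-1 : ℚ) ^ (r - 1) ∧
      (gandhi (r - 1)).eval (-2) = (-1 : ℚ) ^ (r - 1) * (2 ^ (2 * r - 1) + 1) / 3 := by
  obtain ⟨s, rfl⟩ : ∃ s, r = s + 1 := ⟨r - 1, by omega⟩
  have hsub : s + 1 - 1 = s := by omega
  have hexp : 2 * (s + 1) + 1 = 2 * s + 3 := by omega
  rw [hsub, hexp]
  have hI2 : Finset.Icc 1 2 = ({1, 2} : Finset ℕ) := by decide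
  refine ⟨fun n hn => main s n hn, ?_, ?_⟩
  · have h := main s 1 le_rfl
    norm_num at h
    rw [h]
    ring
  · have h := main s 2 (by norm_num)
    rw [hI2] at h
    norm_num [Finset.sum_insert, Finset.sum_singleton] at h
    rw [show (Nat.choose 4 2) = 6 from rfl] at h
    push_cast at h
    rw [h]
    have h1 : (2:ℚ)^(2*s+3) = 8 * 2^(2*s) := by rw [pow_add]; ring
    have h2 : (2:ℚ)^(2*(s+1)-1) = 2 * 2^(2*s) := by
      rw [show 2*(s+1)-1 = 2*s+1 by omega, pow_add]; ring
    rw [h1, h2]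
    ring
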